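/- arXiv:1910.02326 — 2 statements merged into one kernel-verified Lean document; each statement's English description precedes it below -/
import Mathlib

section
/- Uniqueness of reduced rational forms of formal characters (Lemma 3.7 / Lemma 3.8): Let T and T′ be finite subsets of ℕ^N∖{0} such that the binomials b_d = 1 − X^d, for d ranging over T ∪ T′, are pairwise coprime and squarefree in ℤ[x₁,…,x_N]. Let μ₁,…,μ_m ∈ V lie in pairwise distinct cosets of Q, and likewise ν₁,…,ν_{m′}; let f₁,…,f_m and g₁,…,g_{m′} ∈ ℤ[x₁,…,x_N] have nonzero constant term; let n : T → ℕ and n′ : T′ → ℕ take only positive values; assume that for every d ∈ T there is some i with b_d ∤ f_i, and for every d ∈ T′ there is some j with b_d ∤ g_j. If, in 𝒳, (∑_{i=1}^m e^{μ_i}·f_i) · ∏_{d∈T′} b_d^{n′(d)} = (∑_{j=1}^{m′} e^{ν_j}·g_j) · ∏_{d∈T} b_d^{n(d)}, then T = T′, n = n′, m = m′, and there is a bijection σ of the index sets with ν_j = μ_{σ(j)} and g_j = f_{σ(j)} for all j. -/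
set_option linter.unusedSectionVars false
set_option maxHeartbeats 1000000


open Function MvPolynomial

noncomputable section

variable {V : Type*} [AddCommGroup V] [Module ℝ V]

/-- The positive cone `Q⁺` generated by the simple roots `α`. -/
def Qplus {N : ℕ} (α : Fin N → V) : Set V :=
  {v | ∃ n : Fin N → ℕ, v = ∑ i, n i • α i}

/-- The root lattice `Q` generated by the simple roots `α`. -/
def Qlat {N : ℕ} (α : Fin N → V) : Set V :=
  {v | ∃ n : Fin N → ℤ, v = ∑ i, n i • α i}

/-- A subset of `V` is lower-finite if it is contained in a finite union
of sets of the form `ν - Q⁺` with `ν ∈ V`. -/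
def LowerFinite {N : ℕ} (α : Fin N → V) (A : Set V) : Prop :=
  ∃ s : Finset V, A ⊆ ⋃ ν ∈ s, {x | ∃ q ∈ Qplus α, x = ν - q}

/-- `e μ` : the indicator function of `μ`, i.e. the element `e^μ` of the character ring. -/
def e (μ : V) : V → ℤ := Set.indicator {μ} 1

/-- Convolution product on the character ring: `(f·g)(λ) = ∑_{μ+η=λ} f(μ)g(η)`. -/
def conv (f g : V → ℤ) : V → ℤ := fun l => ∑ᶠ μ, f μ * g (l - μ)

open scoped Classical in
/-- The map `ℤ[x₁,…,x_N] → 𝒳` determined by sending `xᵢ` to `e^{-αᵢ}`. -/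
def polyToChar {N : ℕ} (α : Fin N → V) (p : MvPolynomial (Fin N) ℤ) : V → ℤ :=
  fun v => ∑ᶠ d : Fin N →₀ ℕ, if v = -(∑ i, d i • α i) then coeff d p else 0

/-- The binomial `b_d = 1 - X^d` in `ℤ[x₁,…,x_N]`. -/
def bd {N : ℕ} (d : Fin N → ℕ) : MvPolynomial (Fin N) ℤ :=
  1 - ∏ i, X i ^ d i

section Aux
variable {N : ℕ} {α : Fin N → V}

/-- The image of an exponent vector in `V`. -/
def emb (α : Fin N → V) (d : Fin N →₀ ℕ) : V := -(∑ i, d i • α i)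

lemma emb_zero : emb α 0 = 0 := by simp [emb]

lemma emb_add (a b : Fin N →₀ ℕ) : emb α (a + b) = emb α a + emb α b := by
  simp [emb, Finsupp.add_apply, add_smul, Finset.sum_add_distrib]; abel

lemma sum_zsmul_eq_zero (hα : LinearIndependent ℝ α) {c : Fin N → ℤ}
    (h : ∑ i, c i • α i = 0) : c = 0 := by
  have h2 : ∑ i, ((c i : ℝ)) • α i = 0 := by
    simpa [Int.cast_smul_eq_zsmul] using h
  funext i
  exact_mod_cast Fintype.linearIndependent_iff.mp hα _ h2 i

lemma emb_inj (hα : LinearIndependent ℝ α) : Function.Injective (emb α) := by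
  intro a b hab
  have h1 : ∑ i, (a i) • α i = ∑ i, (b i) • α i := neg_injective hab
  have h0 : ∑ i, ((a i : ℤ) - (b i : ℤ)) • α i = 0 := by
    simp only [sub_smul, Finset.sum_sub_distrib, natCast_zsmul, h1, sub_self]
  have hc := sum_zsmul_eq_zero hα h0
  ext i
  have := congrFun hc i
  simp only [Pi.zero_apply] at this
  omega

lemma emb_sub_emb (hα : LinearIndependent ℝ α) {D d c : Fin N →₀ ℕ} :
    emb α D - emb α d = emb α c ↔ c + d = D := by
  rw [sub_eq_iff_eq_add, ← emb_add, (emb_inj hα).eq_iff, eq_comm]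

lemma emb_eq_zero (hα : LinearIndependent ℝ α) {d : Fin N →₀ ℕ} (h : emb α d = 0) : d = 0 :=
  emb_inj hα (h.trans emb_zero.symm)

lemma emb_sub_mem_Qlat (d d' : Fin N →₀ ℕ) : emb α d' - emb α d ∈ Qlat α := by
  refine ⟨fun i => (d i : ℤ) - (d' i : ℤ), ?_⟩
  simp only [emb, sub_smul, Finset.sum_sub_distrib, natCast_zsmul]
  abel

lemma Qlat_add {u v : V} (hu : u ∈ Qlat α) (hv : v ∈ Qlat α) : u + v ∈ Qlat α := by
  obtain ⟨a, rfl⟩ := hu; obtain ⟨b, rfl⟩ := hv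
  exact ⟨fun i => a i + b i, by simp [add_smul, Finset.sum_add_distrib]⟩

lemma Qlat_neg {u : V} (hu : u ∈ Qlat α) : -u ∈ Qlat α := by
  obtain ⟨a, rfl⟩ := hu
  exact ⟨fun i => -a i, by simp [neg_smul, Finset.sum_neg_distrib]⟩

lemma Qlat_sub {u v : V} (hu : u ∈ Qlat α) (hv : v ∈ Qlat α) : u - v ∈ Qlat α := by
  rw [sub_eq_add_neg]; exact Qlat_add hu (Qlat_neg hv)

end Aux
section Ptc
variable {N : ℕ} {α : Fin N → V}

open scoped Classical in
lemma ptc_def (p : MvPolynomial (Fin N) ℤ) (v : V) :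
    polyToChar α p v = ∑ᶠ d : Fin N →₀ ℕ, if v = emb α d then coeff d p else 0 := rfl

lemma ptc_apply_emb (hα : LinearIndependent ℝ α) (p : MvPolynomial (Fin N) ℤ)
    (d : Fin N →₀ ℕ) : polyToChar α p (emb α d) = coeff d p := by
  classical
  rw [ptc_def, finsum_eq_single _ d ?_, if_pos rfl]
  intro d' hd'
  rw [if_neg]
  exact fun h => hd' (emb_inj hα h).symm

lemma ptc_apply_not_range (p : MvPolynomial (Fin N) ℤ) {v : V}
    (hv : ∀ d, v ≠ emb α d) : polyToChar α p v = 0 := by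
  classical
  rw [ptc_def]
  exact finsum_eq_zero_of_forall_eq_zero fun d => if_neg (hv d)

lemma ptc_ne_zero_range (p : MvPolynomial (Fin N) ℤ) {v : V}
    (h : polyToChar α p v ≠ 0) : ∃ d, v = emb α d := by
  by_contra hc
  push_neg at hc
  exact h (ptc_apply_not_range p hc)

lemma ptc_eq_zero_outside (hα : LinearIndependent ℝ α) (p : MvPolynomial (Fin N) ℤ) {v : V}
    (hv : v ∉ emb α '' ↑p.support) : polyToChar α p v = 0 := by
  by_cases h : ∃ d, v = emb α d
  · obtain ⟨d, rfl⟩ := h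
    rw [ptc_apply_emb hα]
    by_contra hc
    exact hv ⟨d, MvPolynomial.mem_support_iff.mpr hc, rfl⟩
  · push_neg at h
    exact ptc_apply_not_range p h

lemma ptc_support_finite (hα : LinearIndependent ℝ α) (p : MvPolynomial (Fin N) ℤ) :
    (Function.support (polyToChar α p)).Finite := by
  refine Set.Finite.subset (p.support.finite_toSet.image (emb α)) fun v hv => ?_
  simp only [Function.mem_support] at hv
  by_contra h
  exact hv (ptc_eq_zero_outside hα p h)

lemma ptc_injective (hα : LinearIndependent ℝ α) :
    Function.Injective (polyToChar (N := N) α) := by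
  intro p q h
  apply MvPolynomial.ext
  intro d
  have := congrFun h (emb α d)
  rwa [ptc_apply_emb hα, ptc_apply_emb hα] at this

open scoped Classical in
lemma ptc_term_support_finite (p : MvPolynomial (Fin N) ℤ) (v : V) :
    (Function.support fun d : Fin N →₀ ℕ =>
      if v = emb α d then coeff d p else 0).Finite := by
  classical
  refine Set.Finite.subset p.support.finite_toSet fun d hd => ?_
  simp only [Function.mem_support] at hd
  by_cases h : v = emb α d
  · rw [if_pos h] at hd
    exact MvPolynomial.mem_support_iff.mpr hd
  · rw [if_neg h] at hd
    exact absurd rfl hd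

lemma ptc_add (p q : MvPolynomial (Fin N) ℤ) :
    polyToChar α (p + q) = polyToChar α p + polyToChar α q := by
  classical
  funext v
  rw [Pi.add_apply, ptc_def, ptc_def, ptc_def,
    ← finsum_add_distrib (ptc_term_support_finite p v) (ptc_term_support_finite q v)]
  apply finsum_congr
  intro d
  rw [MvPolynomial.coeff_add]
  split <;> simp

lemma ptc_zero : polyToChar (N := N) α 0 = 0 := by
  funext v
  rw [ptc_def]
  simp

lemma ptc_sum {ι : Type*} (s : Finset ι) (F : ι → MvPolynomial (Fin N) ℤ) :
    polyToChar α (∑ i ∈ s, F i) = fun v => ∑ i ∈ s, polyToChar α (F i) v := by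
  classical
  induction s using Finset.cons_induction with
  | empty => simp only [Finset.sum_empty]; exact ptc_zero
  | cons a s ha ih =>
    funext v
    rw [Finset.sum_cons, ptc_add, Pi.add_apply, ih, Finset.sum_cons]

open scoped Classical in
lemma ptc_monomial (hα : LinearIndependent ℝ α) (d : Fin N →₀ ℕ) (c : ℤ) :
    polyToChar α (monomial d c) = fun v => if v = emb α d then c else 0 := by
  classical
  funext v
  by_cases h : v = emb α d
  · subst h
    simp [ptc_apply_emb hα, MvPolynomial.coeff_monomial]
  · rw [if_neg h]
    by_cases h2 : ∃ d', v = emb α d'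
    · obtain ⟨d', rfl⟩ := h2
      rw [ptc_apply_emb hα, MvPolynomial.coeff_monomial, if_neg]
      exact fun hd => h (by rw [hd])
    · push_neg at h2
      exact ptc_apply_not_range _ h2

end Ptc
section Conv
variable {N : ℕ} {α : Fin N → V}

lemma conv_apply (f g : V → ℤ) (l : V) : conv f g l = ∑ᶠ x, f x * g (l - x) := rfl

open scoped Classical in
lemma conv_single_right (f : V → ℤ) (w : V) (c : ℤ) (l : V) :
    conv f (fun v => if v = w then c else 0) l = f (l - w) * c := by
  classical
  rw [conv_apply, finsum_eq_single _ (l - w) ?_]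
  · rw [if_pos (sub_sub_cancel l w)]
  · intro x hx
    rw [if_neg, mul_zero]
    intro h
    exact hx (by rw [← h, sub_sub_cancel])

lemma conv_e_left (μ : V) (h : V → ℤ) (l : V) : conv (e μ) h l = h (l - μ) := by
  rw [conv_apply, finsum_eq_single _ μ ?_]
  · have : e μ μ = 1 := by simp [e]
    rw [this, one_mul]
  · intro x hx
    have : e μ x = 0 := by simp [e, hx]
    rw [this, zero_mul]

lemma conv_add_left (f₁ f₂ g : V → ℤ) (h₁ : (Function.support f₁).Finite)
    (h₂ : (Function.support f₂).Finite) (l : V) :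
    conv (f₁ + f₂) g l = conv f₁ g l + conv f₂ g l := by
  simp only [conv_apply, Pi.add_apply, add_mul]
  exact finsum_add_distrib
    (h₁.subset (Function.support_mul_subset_left f₁ fun x => g (l - x)))
    (h₂.subset (Function.support_mul_subset_left f₂ fun x => g (l - x)))

lemma supp_sum_finite {ι : Type*} (s : Finset ι) (F : ι → V → ℤ)
    (hF : ∀ i ∈ s, (Function.support (F i)).Finite) :
    (Function.support fun v => ∑ i ∈ s, F i v).Finite := by
  refine Set.Finite.subset (Set.Finite.biUnion s.finite_toSet hF) ?_
  intro v hv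
  simp only [Function.mem_support] at hv
  by_contra h
  simp only [Set.mem_iUnion, Function.mem_support, not_exists, not_not] at h
  exact hv (Finset.sum_eq_zero fun i hi => h i hi)

lemma conv_sum_left {ι : Type*} (s : Finset ι) (F : ι → V → ℤ)
    (hF : ∀ i ∈ s, (Function.support (F i)).Finite) (g : V → ℤ) (l : V) :
    conv (fun v => ∑ i ∈ s, F i v) g l = ∑ i ∈ s, conv (F i) g l := by
  classical
  induction s using Finset.cons_induction with
  | empty => simp [conv]
  | cons a s ha ih =>
    simp only [Finset.sum_cons]
    rw [← ih (fun i hi => hF i (Finset.mem_cons_of_mem hi))]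
    exact conv_add_left (F a) (fun v => ∑ i ∈ s, F i v) g
      (hF a (Finset.mem_cons_self a s))
      (supp_sum_finite s F fun i hi => hF i (Finset.mem_cons_of_mem hi)) l

lemma conv_add_right (f g₁ g₂ : V → ℤ) (h₁ : (Function.support f).Finite) (l : V) :
    conv f (g₁ + g₂) l = conv f g₁ l + conv f g₂ l := by
  simp only [conv_apply, Pi.add_apply, mul_add]
  exact finsum_add_distrib
    (h₁.subset (Function.support_mul_subset_left f fun x => g₁ (l - x)))
    (h₁.subset (Function.support_mul_subset_left f fun x => g₂ (l - x)))

lemma conv_sum_right {ι : Type*} (s : Finset ι) (f : V → ℤ) (G : ι → V → ℤ)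
    (hf : (Function.support f).Finite) (l : V) :
    conv f (fun v => ∑ i ∈ s, G i v) l = ∑ i ∈ s, conv f (G i) l := by
  classical
  induction s using Finset.cons_induction with
  | empty => simp [conv]
  | cons a s ha ih =>
    simp only [Finset.sum_cons]
    rw [← ih]
    exact conv_add_right f (G a) (fun v => ∑ i ∈ s, G i v) hf l

lemma conv_translate_left (F G : V → ℤ) (μ l : V) :
    conv (fun v => F (v - μ)) G l = conv F G (l - μ) := by
  rw [conv_apply, conv_apply]
  refine finsum_eq_of_bijective (fun x : V => x - μ) (Equiv.subRight μ).bijective fun x => ?_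
  have h : l - μ - (x - μ) = l - x := by abel
  rw [h]

end Conv
section Mult
variable {N : ℕ} {α : Fin N → V}

lemma conv_ptc_monomial (hα : LinearIndependent ℝ α) (p : MvPolynomial (Fin N) ℤ)
    (d : Fin N →₀ ℕ) (c : ℤ) (l : V) :
    polyToChar α p (l - emb α d) * c = polyToChar α (p * monomial d c) l := by
  classical
  by_cases h : ∃ D, l = emb α D
  · obtain ⟨D, rfl⟩ := h
    rw [ptc_apply_emb hα, MvPolynomial.coeff_mul_monomial']
    by_cases hle : d ≤ D
    · rw [if_pos hle]
      have h2 : emb α D - emb α d = emb α (D - d) :=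
        (emb_sub_emb hα).mpr (tsub_add_cancel_of_le hle)
      rw [h2, ptc_apply_emb hα]
    · rw [if_neg hle]
      have hnr : ∀ c', emb α D - emb α d ≠ emb α c' := by
        intro c' hc'
        exact hle ((emb_sub_emb hα).mp hc' ▸ le_add_self)
      rw [ptc_apply_not_range _ hnr, zero_mul]
  · push_neg at h
    have hnr : ∀ c', l - emb α d ≠ emb α c' := by
      intro c' hc'
      exact h (c' + d) (by rw [emb_add, ← sub_eq_iff_eq_add.mp hc'])
    rw [ptc_apply_not_range _ hnr, ptc_apply_not_range _ h, zero_mul]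

lemma conv_ptc (hα : LinearIndependent ℝ α) (p q : MvPolynomial (Fin N) ℤ) :
    conv (polyToChar α p) (polyToChar α q) = polyToChar α (p * q) := by
  funext l
  conv_lhs => rw [← support_sum_monomial_coeff q, ptc_sum]
  rw [conv_sum_right _ _ _ (ptc_support_finite hα p) l]
  conv_rhs => rw [← support_sum_monomial_coeff q, Finset.mul_sum]
  rw [ptc_sum]
  refine Finset.sum_congr rfl fun d hd => ?_
  rw [ptc_monomial hα, conv_single_right]
  exact conv_ptc_monomial hα p d (coeff d q) l

lemma translate_support_finite (h : V → ℤ) (μ : V) (hh : (Function.support h).Finite) :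
    (Function.support fun v => h (v - μ)).Finite := by
  refine Set.Finite.subset (hh.image (· + μ)) fun v hv => ?_
  simp only [Function.mem_support] at hv
  exact ⟨v - μ, hv, by simp⟩

lemma master (hα : LinearIndependent ℝ α) {k : ℕ} (w : Fin k → V)
    (p : Fin k → MvPolynomial (Fin N) ℤ) (q : MvPolynomial (Fin N) ℤ) (l : V) :
    conv (∑ i, conv (e (w i)) (polyToChar α (p i))) (polyToChar α q) l
      = ∑ i, polyToChar α (p i * q) (l - w i) := by
  have h1 : (∑ i, conv (e (w i)) (polyToChar α (p i)))
      = fun v => ∑ i, polyToChar α (p i) (v - w i) := by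
    funext v
    rw [Finset.sum_apply]
    exact Finset.sum_congr rfl fun i _ => conv_e_left (w i) _ v
  rw [h1, conv_sum_left _ _
    (fun i _ => translate_support_finite _ (w i) (ptc_support_finite hα (p i))) _ l]
  refine Finset.sum_congr rfl fun i _ => ?_
  rw [conv_translate_left, conv_ptc hα]

end Mult
section Aux2
variable {N : ℕ} {α : Fin N → V}

lemma emb_mem_Qlat (d : Fin N →₀ ℕ) : emb α d ∈ Qlat α := by
  refine ⟨fun i => -(d i : ℤ), ?_⟩
  simp only [emb, neg_smul, natCast_zsmul, Finset.sum_neg_distrib]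

lemma coeff_zero_mul' {p q : MvPolynomial (Fin N) ℤ} :
    coeff 0 (p * q) = coeff 0 p * coeff 0 q := by
  simp only [← constantCoeff_eq, map_mul]

end Aux2
/-- Lemmas 3.7/3.8: uniqueness of reduced rational forms of formal
characters in the character ring `𝒳`. -/
theorem uniqueness_of_reduced_rational_form
    {N : ℕ} (α : Fin N → V) (hα : LinearIndependent ℝ α)
    (T T' : Finset (Fin N → ℕ))
    (hT0 : ∀ d ∈ T ∪ T', d ≠ 0)
    (hcop : ∀ d ∈ T ∪ T', ∀ d' ∈ T ∪ T', d ≠ d' →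
      ∀ p : MvPolynomial (Fin N) ℤ, p ∣ bd d → p ∣ bd d' → IsUnit p)
    (hsqf : ∀ d ∈ T ∪ T', Squarefree (bd d))
    {m m' : ℕ} (μ : Fin m → V) (ν : Fin m' → V)
    (hμ : ∀ i j, i ≠ j → μ i - μ j ∉ Qlat α)
    (hν : ∀ i j, i ≠ j → ν i - ν j ∉ Qlat α)
    (f : Fin m → MvPolynomial (Fin N) ℤ) (g : Fin m' → MvPolynomial (Fin N) ℤ)
    (hf : ∀ i, coeff 0 (f i) ≠ 0) (hg : ∀ j, coeff 0 (g j) ≠ 0)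
    (n n' : (Fin N → ℕ) → ℕ)
    (hn : ∀ d ∈ T, 0 < n d) (hn' : ∀ d ∈ T', 0 < n' d)
    (hfred : ∀ d ∈ T, ∃ i, ¬ bd d ∣ f i)
    (hgred : ∀ d ∈ T', ∃ j, ¬ bd d ∣ g j)
    (heq : conv (∑ i, conv (e (μ i)) (polyToChar α (f i)))
             (polyToChar α (∏ d ∈ T', bd d ^ n' d))
         = conv (∑ j, conv (e (ν j)) (polyToChar α (g j)))
             (polyToChar α (∏ d ∈ T, bd d ^ n d))) :
    T = T' ∧ (∀ d ∈ T, n d = n' d) ∧ m = m' ∧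
      ∃ σ : Fin m' → Fin m, Function.Bijective σ ∧
        ∀ j, ν j = μ (σ j) ∧ g j = f (σ j) := by
  classical
  set B : MvPolynomial (Fin N) ℤ := ∏ d ∈ T, bd d ^ n d with hBdef
  set B' : MvPolynomial (Fin N) ℤ := ∏ d ∈ T', bd d ^ n' d with hB'def
  -- constant coefficient facts
  have hbdcc : ∀ d : Fin N → ℕ, d ≠ 0 → constantCoeff (bd d) = 1 := by
    intro d hd
    obtain ⟨i0, hi0⟩ : ∃ i, d i ≠ 0 := by
      by_contra h; push_neg at h; exact hd (funext h)
    simp only [bd, map_sub, map_one, map_prod, map_pow, constantCoeff_X]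
    rw [Finset.prod_eq_zero (Finset.mem_univ i0) (zero_pow hi0), sub_zero]
  have hBcc : constantCoeff B = 1 := by
    rw [hBdef, map_prod]
    exact Finset.prod_eq_one fun d hd => by
      rw [map_pow, hbdcc d (hT0 d (Finset.mem_union_left _ hd)), one_pow]
  have hB'cc : constantCoeff B' = 1 := by
    rw [hB'def, map_prod]
    exact Finset.prod_eq_one fun d hd => by
      rw [map_pow, hbdcc d (hT0 d (Finset.mem_union_right _ hd)), one_pow]
  have hbdne : ∀ d ∈ T ∪ T', bd d ≠ 0 := by
    intro d hd h0
    have := hbdcc d (hT0 d hd)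
    rw [h0, map_zero] at this
    exact zero_ne_one this
  have hB0 : B ≠ 0 := by
    intro h0; rw [h0, map_zero] at hBcc; exact zero_ne_one hBcc
  rw [constantCoeff_eq] at hBcc hB'cc
  have hFcc : ∀ i, coeff 0 (f i * B') ≠ 0 := by
    intro i
    rw [coeff_zero_mul', hB'cc, mul_one]
    exact hf i
  have hGcc : ∀ j, coeff 0 (g j * B) ≠ 0 := by
    intro j
    rw [coeff_zero_mul', hBcc, mul_one]
    exact hg j
  -- the key pointwise identity
  have key : ∀ l, ∑ i, polyToChar α (f i * B') (l - μ i)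
      = ∑ j, polyToChar α (g j * B) (l - ν j) := by
    intro l
    have h := congrFun heq l
    rw [master hα μ f B' l, master hα ν g B l] at h
    exact h
  -- support / coset helpers
  have memQ : ∀ (p : MvPolynomial (Fin N) ℤ) (w l : V),
      polyToChar α p (l - w) ≠ 0 → l - w ∈ Qlat α := by
    intro p w l h
    obtain ⟨d, hd⟩ := ptc_ne_zero_range p h
    rw [hd]; exact emb_mem_Qlat d
  have atself : ∀ (p : MvPolynomial (Fin N) ℤ) (w : V), coeff 0 p ≠ 0 →
      polyToChar α p (w - w) ≠ 0 := by
    intro p w hp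
    rw [sub_self, ← emb_zero (α := α), ptc_apply_emb hα]
    exact hp
  -- i ↦ j map
  have exj : ∀ i, ∃ j, (μ i - ν j ∈ Qlat α) ∧
      ∀ l, polyToChar α (f i * B') (l - μ i) = polyToChar α (g j * B) (l - ν j) := by
    intro i
    have hΦne : polyToChar α (f i * B') (μ i - μ i) ≠ 0 := atself _ _ (hFcc i)
    have hsum : ∑ j, polyToChar α (g j * B) (μ i - ν j)
        = polyToChar α (f i * B') (μ i - μ i) := by
      rw [← key (μ i)]
      refine Finset.sum_eq_single_of_mem i (Finset.mem_univ i) fun i' _ hne => ?_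
      by_contra h'
      refine hμ i' i hne ?_
      have he : μ i' - μ i = (μ i' - μ i) := rfl
      have h1 := memQ _ _ _ h'
      have h2 := memQ _ _ _ hΦne
      have h3 : μ i' - μ i = (μ i - μ i) - (μ i - μ i') := by abel
      rw [h3]; exact Qlat_sub h2 h1
    obtain ⟨j, hj⟩ : ∃ j, polyToChar α (g j * B) (μ i - ν j) ≠ 0 := by
      by_contra hcon; push_neg at hcon
      rw [Finset.sum_eq_zero fun j _ => hcon j] at hsum
      exact hΦne hsum.symm
    have hij : μ i - ν j ∈ Qlat α := memQ _ _ _ hj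
    refine ⟨j, hij, fun l => ?_⟩
    by_cases hc : l - μ i ∈ Qlat α
    · have hL : ∑ i', polyToChar α (f i' * B') (l - μ i')
          = polyToChar α (f i * B') (l - μ i) := by
        refine Finset.sum_eq_single_of_mem i (Finset.mem_univ i) fun i' _ hne => ?_
        by_contra h'
        refine hμ i' i hne ?_
        have h1 := memQ _ _ _ h'
        have h3 : μ i' - μ i = (l - μ i) - (l - μ i') := by abel
        rw [h3]; exact Qlat_sub hc h1
      have hR : ∑ j', polyToChar α (g j' * B) (l - ν j')
          = polyToChar α (g j * B) (l - ν j) := by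
        refine Finset.sum_eq_single_of_mem j (Finset.mem_univ j) fun j' _ hne => ?_
        by_contra h'
        refine hν j' j hne ?_
        have h1 := memQ _ _ _ h'
        have h3 : ν j' - ν j = ((l - μ i) + (μ i - ν j)) - (l - ν j') := by abel
        rw [h3]; exact Qlat_sub (Qlat_add hc hij) h1
      rw [← hL, key l, hR]
    · have h1 : polyToChar α (f i * B') (l - μ i) = 0 := by
        by_contra h'
        exact hc (memQ _ _ _ h')
      have h2 : polyToChar α (g j * B) (l - ν j) = 0 := by
        by_contra h'
        refine hc ?_
        have h3 : l - μ i = (l - ν j) - (μ i - ν j) := by abel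
        rw [h3]; exact Qlat_sub (memQ _ _ _ h') hij
      rw [h1, h2]
  choose τ hτQ hτ using exj
  have hτinj : Function.Injective τ := by
    intro i i' hii
    by_contra hne
    refine hμ i i' hne ?_
    have h3 : μ i - μ i' = (μ i - ν (τ i)) - (μ i' - ν (τ i)) := by abel
    rw [h3]
    exact Qlat_sub (hτQ i) (hii ▸ hτQ i')
  have hτsurj : Function.Surjective τ := by
    intro j
    have hΨne : polyToChar α (g j * B) (ν j - ν j) ≠ 0 := atself _ _ (hGcc j)
    have hsum : ∑ i, polyToChar α (f i * B') (ν j - μ i)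
        = polyToChar α (g j * B) (ν j - ν j) := by
      rw [key (ν j)]
      refine Finset.sum_eq_single_of_mem j (Finset.mem_univ j) fun j' _ hne => ?_
      by_contra h'
      refine hν j' j hne ?_
      have h3 : ν j' - ν j = (ν j - ν j) - (ν j - ν j') := by abel
      rw [h3]; exact Qlat_sub (memQ _ _ _ hΨne) (memQ _ _ _ h')
    obtain ⟨i, hi⟩ : ∃ i, polyToChar α (f i * B') (ν j - μ i) ≠ 0 := by
      by_contra hcon; push_neg at hcon
      rw [Finset.sum_eq_zero fun i _ => hcon i] at hsum
      exact hΨne hsum.symm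
    refine ⟨i, ?_⟩
    by_contra hne
    refine hν (τ i) j hne ?_
    have h3 : ν (τ i) - ν j = (0 - (ν j - μ i)) - (μ i - ν (τ i)) := by abel
    rw [h3]
    exact Qlat_sub (Qlat_sub ⟨0, by simp⟩ (memQ _ _ _ hi)) (hτQ i)
  have hτbij : Function.Bijective τ := ⟨hτinj, hτsurj⟩
  have hm : m = m' := by
    have := Fintype.card_of_bijective hτbij
    simpa using this
  set eqv := Equiv.ofBijective τ hτbij with heqv
  set σ : Fin m' → Fin m := fun j => eqv.symm j with hσdef
  have hσbij : Function.Bijective σ := eqv.symm.bijective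
  have hτσ : ∀ j, τ (σ j) = j := fun j => eqv.apply_symm_apply j
  -- matched pairs
  have key2 : ∀ j, ν j = μ (σ j) ∧ f (σ j) * B' = g j * B := by
    intro j
    have hEq : ∀ l, polyToChar α (f (σ j) * B') (l - μ (σ j))
        = polyToChar α (g j * B) (l - ν j) := by
      intro l
      have := hτ (σ j) l
      rwa [hτσ j] at this
    have h1 : polyToChar α (g j * B) (μ (σ j) - ν j) ≠ 0 := by
      rw [← hEq (μ (σ j))]
      exact atself _ _ (hFcc (σ j))
    have h2 : polyToChar α (f (σ j) * B') (ν j - μ (σ j)) ≠ 0 := by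
      rw [hEq (ν j)]
      exact atself _ _ (hGcc j)
    obtain ⟨d, hd⟩ := ptc_ne_zero_range _ h1
    obtain ⟨d', hd'⟩ := ptc_ne_zero_range _ h2
    have hdd : emb α (d + d') = 0 := by
      rw [emb_add, ← hd, ← hd']
      abel
    have hdd0 : d + d' = 0 := emb_eq_zero hα hdd
    have hd0 : d = 0 := le_antisymm (hdd0 ▸ self_le_add_right d d') zero_le
    have hνμ : ν j = μ (σ j) := by
      have : μ (σ j) - ν j = 0 := by rw [hd, hd0, emb_zero]
      rw [eq_comm, ← sub_eq_zero]
      exact this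
    refine ⟨hνμ, ptc_injective hα ?_⟩
    funext v
    have h := hEq (v + μ (σ j))
    rw [add_sub_cancel_right, hνμ, add_sub_cancel_right] at h
    exact h
  have E : ∀ j, f (σ j) * B' = g j * B := fun j => (key2 j).2
  -- polynomial phase
  have hTT' : T = T' := by
    apply Finset.Subset.antisymm
    · intro d hd
      by_contra hdT'
      obtain ⟨i, hfi⟩ := hfred d hd
      obtain ⟨j, hj⟩ := hσbij.2 i
      have hE := E j
      rw [hj] at hE
      have hdvd : bd d ∣ f i * B' := by
        rw [hE]
        exact Dvd.dvd.mul_left (dvd_trans (dvd_pow_self (bd d) (hn d hd).ne')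
          (Finset.dvd_prod_of_mem (fun d' => bd d' ^ n d') hd)) (g j)
      refine hfi (UniqueFactorizationMonoid.dvd_of_dvd_mul_left_of_no_prime_factors
        (hbdne d (Finset.mem_union_left _ hd)) ?_ hdvd)
      intro q hq1 hq2 hqp
      obtain ⟨d', hd'T', hq3⟩ := (hqp.dvd_finset_prod_iff _).mp hq2
      have hq4 : q ∣ bd d' := hqp.dvd_of_dvd_pow hq3
      exact hqp.not_unit (hcop d (Finset.mem_union_left _ hd) d'
        (Finset.mem_union_right _ hd'T') (fun hh => hdT' (hh ▸ hd'T')) q hq1 hq4)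
    · intro d hd
      by_contra hdT
      obtain ⟨j, hgj⟩ := hgred d hd
      have hE := E j
      have hdvd : bd d ∣ g j * B := by
        rw [← hE]
        exact Dvd.dvd.mul_left (dvd_trans (dvd_pow_self (bd d) (hn' d hd).ne')
          (Finset.dvd_prod_of_mem (fun d' => bd d' ^ n' d') hd)) (f (σ j))
      refine hgj (UniqueFactorizationMonoid.dvd_of_dvd_mul_left_of_no_prime_factors
        (hbdne d (Finset.mem_union_right _ hd)) ?_ hdvd)
      intro q hq1 hq2 hqp
      obtain ⟨d', hd'T, hq3⟩ := (hqp.dvd_finset_prod_iff _).mp hq2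
      have hq4 : q ∣ bd d' := hqp.dvd_of_dvd_pow hq3
      exact hqp.not_unit (hcop d (Finset.mem_union_right _ hd) d'
        (Finset.mem_union_left _ hd'T) (fun hh => hdT (hh ▸ hd'T)) q hq1 hq4)
  subst hTT'
  have hnn' : ∀ d ∈ T, n d = n' d := by
    intro d hd
    have hbdd0 : bd d ≠ 0 := hbdne d (Finset.mem_union_left _ hd)
    have hnopf : ∀ ⦃q : MvPolynomial (Fin N) ℤ⦄, q ∣ bd d →
        q ∣ ∏ d' ∈ T.erase d, bd d' ^ n d' → ¬ Prime q := by
      intro q hq1 hq2 hqp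
      obtain ⟨d', hd'E, hq3⟩ := (hqp.dvd_finset_prod_iff _).mp hq2
      have hq4 : q ∣ bd d' := hqp.dvd_of_dvd_pow hq3
      exact hqp.not_unit (hcop d (Finset.mem_union_left _ hd) d'
        (Finset.mem_union_left _ (Finset.mem_of_mem_erase hd'E))
        (Ne.symm (Finset.ne_of_mem_erase hd'E)) q hq1 hq4)
    have hnopf' : ∀ ⦃q : MvPolynomial (Fin N) ℤ⦄, q ∣ bd d →
        q ∣ ∏ d' ∈ T.erase d, bd d' ^ n' d' → ¬ Prime q := by
      intro q hq1 hq2 hqp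
      obtain ⟨d', hd'E, hq3⟩ := (hqp.dvd_finset_prod_iff _).mp hq2
      have hq4 : q ∣ bd d' := hqp.dvd_of_dvd_pow hq3
      exact hqp.not_unit (hcop d (Finset.mem_union_left _ hd) d'
        (Finset.mem_union_left _ (Finset.mem_of_mem_erase hd'E))
        (Ne.symm (Finset.ne_of_mem_erase hd'E)) q hq1 hq4)
    have hBf : B = bd d ^ n d * ∏ d' ∈ T.erase d, bd d' ^ n d' :=
      (Finset.mul_prod_erase T _ hd).symm
    have hB'f : B' = bd d ^ n' d * ∏ d' ∈ T.erase d, bd d' ^ n' d' :=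
      (Finset.mul_prod_erase T _ hd).symm
    rcases Nat.lt_trichotomy (n d) (n' d) with hlt | hE0 | hgt
    · exfalso
      obtain ⟨j, hgj⟩ := hgred d hd
      have hE := E j
      have hsplit : bd d ^ n' d = bd d ^ n d * bd d ^ (n' d - n d) := by
        rw [← pow_add]
        congr 1
        omega
      have hcancel : f (σ j) * (bd d ^ (n' d - n d) * ∏ d' ∈ T.erase d, bd d' ^ n' d')
          = g j * ∏ d' ∈ T.erase d, bd d' ^ n d' := by
        have h0 : bd d ^ n d ≠ 0 := pow_ne_zero _ hbdd0
        apply mul_left_cancel₀ h0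
        calc bd d ^ n d * (f (σ j) * (bd d ^ (n' d - n d) * ∏ d' ∈ T.erase d, bd d' ^ n' d'))
            = f (σ j) * B' := by rw [hB'f, hsplit]; ring
          _ = g j * B := hE
          _ = bd d ^ n d * (g j * ∏ d' ∈ T.erase d, bd d' ^ n d') := by rw [hBf]; ring
      have hdvd : bd d ∣ g j * ∏ d' ∈ T.erase d, bd d' ^ n d' := by
        rw [← hcancel]
        exact Dvd.dvd.mul_left
          (Dvd.dvd.mul_right (dvd_pow_self _ (by omega : n' d - n d ≠ 0)) _) _
      exact hgj (UniqueFactorizationMonoid.dvd_of_dvd_mul_left_of_no_prime_factors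
        hbdd0 hnopf hdvd)
    · exact hE0
    · exfalso
      obtain ⟨i, hfi⟩ := hfred d hd
      obtain ⟨j, hj⟩ := hσbij.2 i
      have hE := E j
      rw [hj] at hE
      have hsplit : bd d ^ n d = bd d ^ n' d * bd d ^ (n d - n' d) := by
        rw [← pow_add]
        congr 1
        omega
      have hcancel : f i * ∏ d' ∈ T.erase d, bd d' ^ n' d'
          = g j * (bd d ^ (n d - n' d) * ∏ d' ∈ T.erase d, bd d' ^ n d') := by
        have h0 : bd d ^ n' d ≠ 0 := pow_ne_zero _ hbdd0
        apply mul_left_cancel₀ h0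
        calc bd d ^ n' d * (f i * ∏ d' ∈ T.erase d, bd d' ^ n' d')
            = f i * B' := by rw [hB'f]; ring
          _ = g j * B := hE
          _ = bd d ^ n' d * (g j * (bd d ^ (n d - n' d) * ∏ d' ∈ T.erase d, bd d' ^ n d')) := by
              rw [hBf, hsplit]; ring
      have hdvd : bd d ∣ f i * ∏ d' ∈ T.erase d, bd d' ^ n' d' := by
        rw [hcancel]
        exact Dvd.dvd.mul_left
          (Dvd.dvd.mul_right (dvd_pow_self _ (by omega : n d - n' d ≠ 0)) _) _
      exact hfi (UniqueFactorizationMonoid.dvd_of_dvd_mul_left_of_no_prime_factors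
        hbdd0 hnopf' hdvd)
  have hBB' : B' = B := by
    rw [hBdef, hB'def]
    exact Finset.prod_congr rfl fun d hd => by rw [hnn' d hd]
  have hfg : ∀ j, g j = f (σ j) := by
    intro j
    have hE := E j
    rw [hBB'] at hE
    exact (mul_right_cancel₀ hB0 hE).symm
  exact ⟨rfl, hnn', hm, σ, hσbij, fun j => ⟨(key2 j).1, hfg j⟩⟩
end
end

section
/- Nonempty denominator forces infinite support (content of Corollary 3.9): Let T ⊆ ℕ^N∖{0} be a finite nonempty set, n : T → ℕ with only positive values, μ₁,…,μ_m ∈ V lying in pairwise distinct cosets of Q, and f₁,…,f_m ∈ ℤ[x₁,…,x_N] such that for every d ∈ T there is some i with b_d ∤ f_i. If x ∈ 𝒳 satisfies x · ∏_{d∈T} b_d^{n(d)} = ∑_{i=1}^m e^{μ_i}·f_i in 𝒳, then x has infinite support. (Hence a nonzero module in category O is finite dimensional if and only if the denominator of the reduced rational form of its formal character equals 1, i.e. its set of denominator roots is empty.) -/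
open Function MvPolynomial

noncomputable section

variable {V : Type*} [AddCommGroup V] [Module ℝ V]

set_option linter.unusedSectionVars false

namespace Aux

variable {N : ℕ}

/-- substitution killing variable `j` -/
def kill (j : Fin N) : MvPolynomial (Fin N) ℤ →ₐ[ℤ] MvPolynomial (Fin N) ℤ :=
  aeval (fun k => if k = j then 0 else X k)

lemma kill_X_self (j : Fin N) : kill j (X j) = 0 := by simp [kill]

lemma X_dvd_sub_kill (j : Fin N) (p : MvPolynomial (Fin N) ℤ) : X j ∣ p - kill j p := by
  induction p using MvPolynomial.induction_on with
  | C a => simp [kill]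
  | add p q hp hq =>
      rw [map_add, add_sub_add_comm]
      exact dvd_add hp hq
  | mul_X p k hp =>
      by_cases hk : k = j
      · subst hk
        rw [map_mul, kill_X_self, mul_zero, sub_zero]
        exact Dvd.intro_left p rfl
      · have hkX : kill j (X k) = X k := by simp [kill, hk]
        rw [map_mul, hkX, ← sub_mul]
        exact hp.mul_right _

lemma X_dvd_iff_kill (j : Fin N) (p : MvPolynomial (Fin N) ℤ) : X j ∣ p ↔ kill j p = 0 := by
  constructor
  · rintro ⟨q, rfl⟩
    rw [map_mul, kill_X_self, zero_mul]
  · intro h0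
    have := X_dvd_sub_kill j p
    rwa [h0, sub_zero] at this

lemma prime_X (j : Fin N) : Prime (X j : MvPolynomial (Fin N) ℤ) := by
  refine ⟨X_ne_zero j, ?_, ?_⟩
  · intro hu
    have := hu.map (constantCoeff (R := ℤ) (σ := Fin N))
    rw [constantCoeff_X] at this
    exact not_isUnit_zero this
  · intro a b hab
    rw [X_dvd_iff_kill] at hab
    rw [X_dvd_iff_kill, X_dvd_iff_kill]
    rw [map_mul] at hab
    exact mul_eq_zero.mp hab

lemma constantCoeff_bd {d : Fin N → ℕ} (hd : d ≠ 0) : constantCoeff (bd d) = 1 := by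
  obtain ⟨i, hi⟩ := Function.ne_iff.mp hd
  have : constantCoeff (∏ i, (X i : MvPolynomial (Fin N) ℤ) ^ d i) = 0 := by
    rw [map_prod]
    refine Finset.prod_eq_zero (Finset.mem_univ i) ?_
    rw [map_pow, constantCoeff_X, zero_pow hi]
  rw [bd, map_sub, map_one, this, sub_zero]

lemma X_not_dvd_bd {d : Fin N → ℕ} (hd : d ≠ 0) (j : Fin N) : ¬ (X j ∣ bd d) := by
  rintro ⟨q, hq⟩
  have := constantCoeff_bd hd
  rw [hq, map_mul, constantCoeff_X, zero_mul] at this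
  exact one_ne_zero this.symm

lemma bd_strip_X {d : Fin N → ℕ} (hd : d ≠ 0) (j : Fin N) (f : MvPolynomial (Fin N) ℤ)
    (h : bd d ∣ X j * f) : bd d ∣ f := by
  obtain ⟨h', hh⟩ := h
  have hXdvd : X j ∣ bd d * h' := ⟨f, hh.symm⟩
  rcases (prime_X j).2.2 _ _ hXdvd with hc | hc
  · exact absurd hc (X_not_dvd_bd hd j)
  · obtain ⟨h'', rfl⟩ := hc
    refine ⟨h'', mul_left_cancel₀ (X_ne_zero j) ?_⟩
    rw [hh]; ring

lemma bd_strip_pow {d : Fin N → ℕ} (hd : d ≠ 0) (j : Fin N) (k : ℕ)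
    (f : MvPolynomial (Fin N) ℤ) (h : bd d ∣ X j ^ k * f) : bd d ∣ f := by
  induction k generalizing f with
  | zero => simpa using h
  | succ k ih =>
      apply ih
      apply bd_strip_X hd j
      have : X j ^ (k + 1) * f = X j * (X j ^ k * f) := by ring
      rwa [this] at h

lemma bd_strip_monomial {d : Fin N → ℕ} (hd : d ≠ 0) (M : Fin N →₀ ℕ)
    (f : MvPolynomial (Fin N) ℤ) (h : bd d ∣ monomial M 1 * f) : bd d ∣ f := by
  induction M using Finsupp.induction generalizing f with
  | zero => simpa [monomial_zero'] using h
  | single_add a b M _ _ ih =>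
      apply ih
      apply bd_strip_pow hd a b
      rw [monomial_single_add] at h
      rwa [mul_assoc] at h

open Finsupp AddMonoidAlgebra

variable (α : Fin N → V)

def Fhom : (Fin N →₀ ℕ) →+ V where
  toFun d := -∑ i, d i • α i
  map_zero' := by simp
  map_add' d₁ d₂ := by
    simp only [Finsupp.coe_add, Pi.add_apply, add_smul, Finset.sum_add_distrib, neg_add]

lemma Fhom_apply (d : Fin N →₀ ℕ) : Fhom α d = -∑ i, d i • α i := rfl

lemma Fhom_apply_zsmul (d : Fin N →₀ ℕ) : Fhom α d = ∑ i, (-(d i : ℤ)) • α i := by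
  rw [Fhom_apply, ← Finset.sum_neg_distrib]
  refine Finset.sum_congr rfl fun i _ => ?_
  rw [neg_smul, natCast_zsmul]

lemma Fhom_injective (hα : LinearIndependent ℝ α) : Function.Injective (Fhom α) := by
  intro d₁ d₂ h
  rw [Fhom_apply, Fhom_apply, neg_inj] at h
  have h2 : ∑ i, ((d₁ i : ℝ) - (d₂ i : ℝ)) • α i = 0 := by
    simp only [sub_smul, Finset.sum_sub_distrib, Nat.cast_smul_eq_nsmul]
    rw [sub_eq_zero, h]
  have h3 := Fintype.linearIndependent_iff.mp hα _ h2
  ext i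
  have := sub_eq_zero.mp (h3 i)
  exact_mod_cast this

lemma Qlat_sub {v w : V} (hv : v ∈ Qlat α) (hw : w ∈ Qlat α) : v - w ∈ Qlat α := by
  obtain ⟨c₁, rfl⟩ := hv
  obtain ⟨c₂, rfl⟩ := hw
  exact ⟨c₁ - c₂, by simp [sub_smul, Finset.sum_sub_distrib]⟩

lemma Qlat_add {v w : V} (hv : v ∈ Qlat α) (hw : w ∈ Qlat α) : v + w ∈ Qlat α := by
  obtain ⟨c₁, rfl⟩ := hv
  obtain ⟨c₂, rfl⟩ := hw
  exact ⟨c₁ + c₂, by simp [add_smul, Finset.sum_add_distrib]⟩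

lemma Fhom_mem_Qlat (d : Fin N →₀ ℕ) : Fhom α d ∈ Qlat α :=
  ⟨fun i => -(d i : ℤ), Fhom_apply_zsmul α d⟩

def Phi (p : MvPolynomial (Fin N) ℤ) : AddMonoidAlgebra ℤ V :=
  AddMonoidAlgebra.mapDomain (Fhom α) p

lemma Phi_mul (p q : MvPolynomial (Fin N) ℤ) : Phi α (p * q) = Phi α p * Phi α q :=
  AddMonoidAlgebra.mapDomain_mul (Fhom α) p q

lemma Phi_monomial (M : Fin N →₀ ℕ) (c : ℤ) :
    Phi α (monomial M c) = AddMonoidAlgebra.single (Fhom α M) c := by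
  rw [← MvPolynomial.single_eq_monomial]
  exact AddMonoidAlgebra.mapDomain_single

lemma Phi_injective (hα : LinearIndependent ℝ α) : Function.Injective (Phi α) :=
  AddMonoidAlgebra.mapDomain_injective (Fhom_injective α hα)

lemma Phi_supp (p : MvPolynomial (Fin N) ℤ) {v : V} (hv : (Phi α p).coeff v ≠ 0) :
    ∃ d, v = Fhom α d := by
  classical
  have h1 : v ∈ (Finsupp.mapDomain (Fhom α) (AddMonoidAlgebra.coeff p)).support := Finsupp.mem_support_iff.mpr hv
  have h2 := Finsupp.mapDomain_support h1
  obtain ⟨d, -, rfl⟩ := Finset.mem_image.mp h2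
  exact ⟨d, rfl⟩

lemma polyToChar_eq (p : MvPolynomial (Fin N) ℤ) : polyToChar α p = ⇑(Phi α p).coeff := by
  classical
  funext v
  rw [polyToChar]
  have hs : (Function.support fun d : Fin N →₀ ℕ =>
      if v = -(∑ i, d i • α i) then coeff d p else 0) ⊆ ↑p.support := by
    intro d hd
    simp only [Function.mem_support] at hd
    by_cases h : v = -(∑ i, d i • α i)
    · rw [if_pos h] at hd
      simpa [MvPolynomial.mem_support_iff] using hd
    · rw [if_neg h] at hd; exact absurd rfl hd
  rw [finsum_eq_finset_sum_of_support_subset _ hs]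
  show _ = Finsupp.mapDomain (Fhom α) (AddMonoidAlgebra.coeff p) v
  rw [Finsupp.mapDomain, Finsupp.sum_apply, Finsupp.sum]
  refine Finset.sum_congr rfl fun d _ => ?_
  rw [Finsupp.single_apply, Fhom_apply]
  rcases eq_or_ne v (-∑ i, d i • α i) with h | h
  · rw [if_pos h, if_pos h.symm]; rfl
  · rw [if_neg h, if_neg (Ne.symm h)]

lemma e_eq (μ₀ : V) : e μ₀ = ⇑(AddMonoidAlgebra.single μ₀ (1:ℤ)).coeff := by
  classical
  funext v
  rw [e, Set.indicator_apply, AddMonoidAlgebra.coeff_single_apply]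
  simp [eq_comm]

lemma mul_apply_left' (y z : AddMonoidAlgebra ℤ V) (v : V) :
    (y * z).coeff v = ∑ b ∈ y.coeff.support, y.coeff b * z.coeff (v - b) := by
  conv_lhs => rw [← AddMonoidAlgebra.sum_coeff_single y, Finsupp.sum, Finset.sum_mul]
  rw [AddMonoidAlgebra.coeff_sum, Finsupp.finset_sum_apply]
  refine Finset.sum_congr rfl fun b _ => ?_
  rw [AddMonoidAlgebra.coeff_single_mul_apply, neg_add_eq_sub]

lemma mul_apply_right' (y z : AddMonoidAlgebra ℤ V) (v : V) :
    (y * z).coeff v = ∑ b ∈ z.coeff.support, y.coeff (v - b) * z.coeff b := by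
  conv_lhs => rw [← AddMonoidAlgebra.sum_coeff_single z, Finsupp.sum, Finset.mul_sum]
  rw [AddMonoidAlgebra.coeff_sum, Finsupp.finset_sum_apply]
  refine Finset.sum_congr rfl fun b _ => ?_
  rw [AddMonoidAlgebra.coeff_mul_single_apply, ← sub_eq_add_neg]

lemma conv_eq (a b : AddMonoidAlgebra ℤ V) : conv ⇑a.coeff ⇑b.coeff = ⇑(a * b).coeff := by
  funext l
  rw [conv]
  have hs : (Function.support fun μ' => a.coeff μ' * b.coeff (l - μ')) ⊆ ↑a.coeff.support := by
    intro μ' h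
    simp only [Function.mem_support] at h
    rw [Finset.mem_coe, Finsupp.mem_support_iff]
    intro h0
    rw [h0, zero_mul] at h
    exact h rfl
  rw [finsum_eq_finset_sum_of_support_subset _ hs, mul_apply_left']

def ftr (p : V → Prop) [DecidablePred p] (y : AddMonoidAlgebra ℤ V) : AddMonoidAlgebra ℤ V :=
  AddMonoidAlgebra.ofCoeff (Finsupp.filter p y.coeff)

lemma ftr_apply (p : V → Prop) [DecidablePred p] (y : AddMonoidAlgebra ℤ V) (v : V) :
    (ftr p y).coeff v = if p v then y.coeff v else 0 :=
  rfl

lemma filter_mul (p : V → Prop) [DecidablePred p] (y z : AddMonoidAlgebra ℤ V)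
    (hz : ∀ b ∈ z.coeff.support, ∀ a : V, p (a + b) ↔ p a) :
    ftr p (y * z) = ftr p y * z := by
  ext v
  rw [ftr_apply, mul_apply_right' y z v, mul_apply_right' (ftr p y) z v]
  by_cases hpv : p v
  · rw [if_pos hpv]
    refine Finset.sum_congr rfl fun b hb => ?_
    rw [ftr_apply, if_pos]
    have := hz b hb (v - b)
    rw [sub_add_cancel] at this
    exact this.mp hpv
  · rw [if_neg hpv]
    symm
    refine Finset.sum_eq_zero fun b hb => ?_
    rw [ftr_apply, if_neg, zero_mul]
    intro hpb
    have := hz b hb (v - b)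
    rw [sub_add_cancel] at this
    exact hpv (this.mpr hpb)

lemma ftr_eq_self (p : V → Prop) [DecidablePred p] (y : AddMonoidAlgebra ℤ V)
    (h : ∀ v, y.coeff v ≠ 0 → p v) : ftr p y = y := by
  ext v
  rw [ftr_apply]
  by_cases hv : p v
  · rw [if_pos hv]
  · rw [if_neg hv]
    by_contra h0
    exact hv (h v (Ne.symm h0))

lemma ftr_eq_zero (p : V → Prop) [DecidablePred p] (y : AddMonoidAlgebra ℤ V)
    (h : ∀ v, y.coeff v ≠ 0 → ¬ p v) : ftr p y = 0 := by
  ext v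
  rw [ftr_apply]
  by_cases hv : p v
  · rw [if_pos hv]
    by_contra h0
    exact h v h0 hv
  · rw [if_neg hv]; rfl

lemma ftr_sum {m : ℕ} (p : V → Prop) [DecidablePred p] (g : Fin m → AddMonoidAlgebra ℤ V) :
    ftr p (∑ j, g j) = ∑ j, ftr p (g j) := by
  ext v
  rw [ftr_apply, AddMonoidAlgebra.coeff_sum, AddMonoidAlgebra.coeff_sum, Finsupp.finset_sum_apply,
    Finsupp.finset_sum_apply]
  by_cases hv : p v
  · rw [if_pos hv]
    exact Finset.sum_congr rfl fun j _ => by rw [ftr_apply, if_pos hv]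
  · rw [if_neg hv]
    symm
    exact Finset.sum_eq_zero fun j _ => by rw [ftr_apply, if_neg hv]

end Aux

/-- content of Corollary 3.9: if the reduced rational form of an
element of `𝒳` has a nonempty set of denominator roots, then that element has
infinite support. -/
theorem nonempty_denominator_forces_infinite_support
    {N : ℕ} (α : Fin N → V) (hα : LinearIndependent ℝ α)
    (T : Finset (Fin N → ℕ)) (hTne : T.Nonempty) (hT0 : ∀ d ∈ T, d ≠ 0)
    (n : (Fin N → ℕ) → ℕ) (hn : ∀ d ∈ T, 0 < n d)
    {m : ℕ} (μ : Fin m → V) (hμ : ∀ i j, i ≠ j → μ i - μ j ∉ Qlat α)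
    (f : Fin m → MvPolynomial (Fin N) ℤ)
    (hfred : ∀ d ∈ T, ∃ i, ¬ bd d ∣ f i)
    (x : V → ℤ) (hx : LowerFinite α (Function.support x))
    (heq : conv x (polyToChar α (∏ d ∈ T, bd d ^ n d))
         = ∑ i, conv (e (μ i)) (polyToChar α (f i))) :
    (Function.support x).Infinite := by
  classical
  by_contra hinf
  have hfin : (Function.support x).Finite := Set.not_infinite.mp hinf
  set P : MvPolynomial (Fin N) ℤ := ∏ d ∈ T, bd d ^ n d with hP
  set X₀ : AddMonoidAlgebra ℤ V := AddMonoidAlgebra.ofCoeff (Finsupp.ofSupportFinite x hfin) with hX₀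
  have hxc : x = ⇑X₀.coeff := rfl
  have E : X₀ * Aux.Phi α P = ∑ i, AddMonoidAlgebra.single (μ i) 1 * Aux.Phi α (f i) := by
    ext v
    have hv := congrFun heq v
    rw [hxc, Aux.polyToChar_eq, Aux.conv_eq] at hv
    rw [AddMonoidAlgebra.coeff_sum, Finsupp.finset_sum_apply, hv, Finset.sum_apply]
    refine Finset.sum_congr rfl fun i _ => ?_
    rw [Aux.e_eq, Aux.polyToChar_eq, Aux.conv_eq]
  obtain ⟨d, hdT⟩ := hTne
  obtain ⟨i, hfi⟩ := hfred d hdT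
  refine hfi ?_
  have hsuppP : ∀ b ∈ (Aux.Phi α P).coeff.support, ∀ a : V,
      (fun v => v - μ i ∈ Qlat α) (a + b) ↔ (fun v => v - μ i ∈ Qlat α) a := by
    intro b hb a
    obtain ⟨dP, hdP⟩ := Aux.Phi_supp α P (Finsupp.mem_support_iff.mp hb)
    have hbQ : b ∈ Qlat α := hdP ▸ Aux.Fhom_mem_Qlat α dP
    constructor
    · intro h
      have h2 := Aux.Qlat_sub α h hbQ
      have h3 : a + b - μ i - b = a - μ i := by abel
      rwa [h3] at h2
    · intro h
      have h2 := Aux.Qlat_add α h hbQ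
      have h3 : a - μ i + b = a + b - μ i := by abel
      rwa [h3] at h2
  have E_i : Aux.ftr (fun v => v - μ i ∈ Qlat α) X₀ * Aux.Phi α P
      = AddMonoidAlgebra.single (μ i) 1 * Aux.Phi α (f i) := by
    have h1 := congrArg (Aux.ftr (fun v => v - μ i ∈ Qlat α)) E
    rw [Aux.filter_mul _ X₀ _ hsuppP, Aux.ftr_sum] at h1
    rw [h1]
    rw [Finset.sum_eq_single i (fun j _ hji => ?_) (fun h => absurd (Finset.mem_univ i) h)]
    · apply Aux.ftr_eq_self
      intro v hv
      rw [AddMonoidAlgebra.coeff_single_mul_apply, one_mul] at hv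
      obtain ⟨dC, hdC⟩ := Aux.Phi_supp α (f i) hv
      show v - μ i ∈ Qlat α
      rw [sub_eq_neg_add, hdC]
      exact Aux.Fhom_mem_Qlat α dC
    · apply Aux.ftr_eq_zero
      intro v hv
      rw [AddMonoidAlgebra.coeff_single_mul_apply, one_mul] at hv
      obtain ⟨dC, hdC⟩ := Aux.Phi_supp α (f j) hv
      intro hpv
      have hpv' : v - μ i ∈ Qlat α := hpv
      have hvj : v - μ j ∈ Qlat α := by
        rw [sub_eq_neg_add, hdC]
        exact Aux.Fhom_mem_Qlat α dC
      have h2 := Aux.Qlat_sub α hpv' hvj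
      have h3 : v - μ i - (v - μ j) = μ j - μ i := by abel
      rw [h3] at h2
      exact hμ j i hji h2
  set Y : AddMonoidAlgebra ℤ V :=
    AddMonoidAlgebra.single (-μ i) (1:ℤ) * Aux.ftr (fun v => v - μ i ∈ Qlat α) X₀ with hY
  have EY : Y * Aux.Phi α P = Aux.Phi α (f i) := by
    rw [hY, mul_assoc, E_i, ← mul_assoc, AddMonoidAlgebra.single_mul_single,
      neg_add_cancel, one_mul, ← AddMonoidAlgebra.one_def, one_mul]
  have hYQ : ∀ v, Y.coeff v ≠ 0 → v ∈ Qlat α := by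
    intro v hv
    rw [hY, AddMonoidAlgebra.coeff_single_mul_apply, one_mul, neg_neg, Aux.ftr_apply] at hv
    by_cases hc : μ i + v - μ i ∈ Qlat α
    · have h3 : μ i + v - μ i = v := by abel
      rwa [h3] at hc
    · rw [if_neg hc] at hv
      exact absurd rfl hv
  have hcf : ∀ v ∈ Y.coeff.support, ∃ c : Fin N → ℤ, v = ∑ j, c j • α j :=
    fun v hv => hYQ v (Finsupp.mem_support_iff.mp hv)
  choose cf hcf' using hcf
  set M : Fin N → ℕ := fun j => Y.coeff.support.attach.sup fun v => (cf v.1 v.2 j).toNat with hM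
  set Mf : Fin N →₀ ℕ := Finsupp.equivFunOnFinite.symm M with hMf
  have hMfj : ∀ j, Mf j = M j := fun j => rfl
  have key : ∀ v ∈ Y.coeff.support, ∃ dd : Fin N →₀ ℕ, Aux.Fhom α Mf + v = Aux.Fhom α dd := by
    intro v hv
    refine ⟨Finsupp.equivFunOnFinite.symm (fun j => ((M j : ℤ) - cf v hv j).toNat), ?_⟩
    have hMc : ∀ j, cf v hv j ≤ (M j : ℤ) := by
      intro j
      refine le_trans (Int.self_le_toNat _) ?_
      exact_mod_cast Finset.le_sup (f := fun v => (cf v.1 v.2 j).toNat)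
        (Finset.mem_attach _ ⟨v, hv⟩)
    rw [Aux.Fhom_apply_zsmul, Aux.Fhom_apply_zsmul]
    conv_lhs => rw [hcf' v hv]
    rw [← Finset.sum_add_distrib]
    refine Finset.sum_congr rfl fun j _ => ?_
    rw [← add_smul]
    congr 1
    have h2 := hMc j
    have h1 : ((Finsupp.equivFunOnFinite.symm (fun j => ((M j : ℤ) - cf v hv j).toNat)) j : ℕ)
        = ((M j : ℤ) - cf v hv j).toNat := rfl
    rw [h1, hMfj j]
    omega
  set Z : AddMonoidAlgebra ℤ V := AddMonoidAlgebra.single (Aux.Fhom α Mf) (1:ℤ) * Y with hZ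
  have hZsupp : ↑Z.coeff.support ⊆ Set.range (Aux.Fhom α) := by
    intro v hv
    rw [Finset.mem_coe, Finsupp.mem_support_iff] at hv
    rw [hZ, AddMonoidAlgebra.coeff_single_mul_apply, one_mul] at hv
    have hb : (-(Aux.Fhom α Mf) + v) ∈ Y.coeff.support := Finsupp.mem_support_iff.mpr hv
    obtain ⟨dd, hdd⟩ := key _ hb
    refine ⟨dd, ?_⟩
    rw [← hdd]
    abel
  have hgZ := AddMonoidAlgebra.mapDomain_comapDomain hZsupp (Aux.Fhom_injective α hα)
  set g : MvPolynomial (Fin N) ℤ :=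
    AddMonoidAlgebra.comapDomain (Aux.Fhom α) (Aux.Fhom_injective α hα) Z with hg
  have hPhig : Aux.Phi α g = Z := hgZ
  have E2 : Aux.Phi α g * Aux.Phi α P = Aux.Phi α (monomial Mf 1) * Aux.Phi α (f i) := by
    rw [hPhig, Aux.Phi_monomial, hZ, mul_assoc, EY]
  have E3 : g * P = monomial Mf 1 * f i :=
    Aux.Phi_injective α hα (by rw [Aux.Phi_mul, Aux.Phi_mul, E2])
  have hdvdP : bd d ∣ P :=
    dvd_trans (dvd_pow_self (bd d) (hn d hdT).ne') (Finset.dvd_prod_of_mem _ hdT)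
  have hdvd : bd d ∣ monomial Mf 1 * f i := by
    rw [← E3]
    exact Dvd.dvd.mul_left hdvdP g
  exact Aux.bd_strip_monomial (hT0 d hdT) Mf (f i) hdvd
end
end
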